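/- Let α ≥ 2 be an integer and let I₁, …, I_α : [0,1] → ℝ² be Lipschitz arcs with I_j(0) = I_j(1) = 0 for every j, such that there is μ > 0 with ∫_0^1 |I_j(t) − I_k(t)| dt = μ for all j ≠ k. Let Ω* be the set of curves γ: ℝ → ℝ² obtained by concatenating these arcs, i.e. γ ∈ Ω* iff there is a sequence (j_i)_{i∈ℤ} in {1,…,α} with γ(i+s) = I_{j_i}(s) for all i ∈ ℤ and s ∈ [0,1]. Then Ω* is invariant under the time-one shift F₁, and the topological entropy of F₁ on (Ω*, ρ) equals log α. -/

import Mathlib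

open Filter

/-- The metric `ρ` on the space of curves `ℝ → M`. -/
noncomputable def rho {M : Type*} [PseudoMetricSpace M] (γ₁ γ₂ : ℝ → M) : ℝ :=
  ∑' i : ℤ, (2 : ℝ) ^ (-|i|) * ∫ t in (i : ℝ)..((i : ℝ) + 1), dist (γ₁ t) (γ₂ t)

/-- The time-one shift on curves: `F₁(γ)(t) = γ(t + 1)`. -/
def timeOneShift {M : Type*} (γ : ℝ → M) : ℝ → M := fun t => γ (t + 1)

/-- A curve `γ : ℝ → M` is `L`-Lipschitz. -/
def LipschitzCurve {M : Type*} [PseudoMetricSpace M] (L : ℝ) (γ : ℝ → M) : Prop :=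
  ∀ s t : ℝ, dist (γ s) (γ t) ≤ L * |s - t|

/-- `E` is an `(n, ε)`-dense subset of `F` for the map `f` and the distance `d`:
`E ⊆ F` and the dynamical balls `{y | d_n^f(x,y) < ε}`, `x ∈ E`, cover `F`. -/
def IsDynCover {X : Type*} (d : X → X → ℝ) (f : X → X) (F : Set X) (ε : ℝ) (n : ℕ)
    (E : Finset X) : Prop :=
  ↑E ⊆ F ∧ ∀ y ∈ F, ∃ x ∈ E, ∀ i < n, d (f^[i] x) (f^[i] y) < ε

/-- `S_d(f, ε, n)`: the minimal cardinality of an `(n, ε)`-dense subset of `F`. -/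
noncomputable def coverCard {X : Type*} (d : X → X → ℝ) (f : X → X) (F : Set X) (ε : ℝ)
    (n : ℕ) : ℕ∞ :=
  ⨅ (E : Finset X) (_ : IsDynCover d f F ε n E), (E.card : ℕ∞)

/-- The topological entropy of `f` on `F`, w.r.t. the distance `d`:
`h(f) = lim_{ε → 0⁺} limsup_{n → ∞} (1/n) log S_d(f, ε, n)`; since the inner rate is
antitone in `ε`, the limit is realized as the supremum over `ε > 0`. -/
noncomputable def topEntropy {X : Type*} (d : X → X → ℝ) (f : X → X) (F : Set X) : EReal :=
  ⨆ (ε : ℝ) (_ : (0 : ℝ) < ε),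
    atTop.limsup fun n : ℕ => ENNReal.log (coverCard d f F ε n) / (n : EReal)

/-- The plane `ℝ²` with the Euclidean distance. -/
abbrev Plane := EuclideanSpace ℝ (Fin 2)

/-- The set `Ω*` of curves obtained by concatenating the arcs `I j`, `j ∈ {1,…,α}`:
`γ ∈ Ω*` iff there is a sequence `(j_i)_{i ∈ ℤ}` with `γ(i + s) = I_{j_i}(s)` for all
`i ∈ ℤ` and `s ∈ [0,1]`. -/
def arcConcatenations {α : ℕ} (I : Fin α → ℝ → Plane) : Set (ℝ → Plane) :=
  {γ | ∃ js : ℤ → Fin α, ∀ i : ℤ, ∀ s ∈ Set.Icc (0 : ℝ) 1, γ ((i : ℝ) + s) = I (js i) s}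

namespace EAC

open scoped ENNReal

variable {α : ℕ}

def IsSeq (I : Fin α → ℝ → Plane) (a : ℤ → Fin α) (γ : ℝ → Plane) : Prop :=
  ∀ i : ℤ, ∀ s ∈ Set.Icc (0 : ℝ) 1, γ ((i : ℝ) + s) = I (a i) s

noncomputable def seqCurve (I : Fin α → ℝ → Plane) (a : ℤ → Fin α) : ℝ → Plane :=
  fun t => I (a ⌊t⌋) (Int.fract t)

theorem isSeq_seqCurve (I : Fin α → ℝ → Plane) (h0 : ∀ j, I j 0 = 0) (h1 : ∀ j, I j 1 = 0)
    (a : ℤ → Fin α) : IsSeq I a (seqCurve I a) := by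
  intro i s hs
  rcases eq_or_lt_of_le hs.2 with h | h
  · subst h
    have : ((i:ℝ) + 1) = ((i + 1 : ℤ) : ℝ) := by push_cast; ring
    rw [this]
    simp [seqCurve, Int.fract_intCast, Int.floor_intCast, h0, h1]
  · have hfl : ⌊(i:ℝ) + s⌋ = i := by
      rw [add_comm, Int.floor_add_intCast, Int.floor_eq_zero_iff.2 ⟨hs.1, h⟩, zero_add]
    have hfr : Int.fract ((i:ℝ) + s) = s := by
      rw [add_comm, Int.fract_add_intCast, Int.fract_eq_self.2 ⟨hs.1, h⟩]
    simp [seqCurve, hfl, hfr]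

theorem isSeq_shift {I : Fin α → ℝ → Plane} {a : ℤ → Fin α} {γ : ℝ → Plane}
    (h : IsSeq I a γ) : IsSeq I (fun i => a (i + 1)) (timeOneShift γ) := by
  intro i s hs
  have : ((i:ℝ) + s) + 1 = ((i + 1 : ℤ) : ℝ) + s := by push_cast; ring
  simpa [timeOneShift, this] using h (i + 1) s hs

theorem isSeq_iterate {I : Fin α → ℝ → Plane} {a : ℤ → Fin α} {γ : ℝ → Plane}
    (h : IsSeq I a γ) (m : ℕ) :
    IsSeq I (fun i => a (i + m)) (timeOneShift^[m] γ) := by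
  induction m generalizing a γ with
  | zero => simpa using h
  | succ m ih =>
    have h2 := ih (isSeq_shift h)
    rw [Function.iterate_succ_apply]
    have : (fun i : ℤ => a (i + m + 1)) = fun i : ℤ => a (i + (m + 1 : ℕ)) := by
      funext i; congr 1; push_cast; ring
    rwa [this] at h2

theorem summable_geom_abs (c : ℝ) : Summable (fun i : ℤ => (2:ℝ) ^ (-|i|) * c) := by
  apply Summable.mul_right
  have heq : (fun i : ℤ => (2:ℝ) ^ (-|i|)) = fun i : ℤ => (2⁻¹ : ℝ) ^ (i.natAbs) := by
    funext i
    rw [zpow_neg, Int.abs_eq_natAbs, zpow_natCast, inv_pow]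
  rw [heq]
  have hg : Summable (fun n : ℕ => (2⁻¹ : ℝ) ^ n) :=
    summable_geometric_of_lt_one (by norm_num) (by norm_num)
  apply Summable.of_nat_of_neg
  · simpa using hg
  · simpa using hg

theorem integral_dist {I : Fin α → ℝ → Plane} {μ : ℝ}
    (hsep : ∀ j k, j ≠ k → (∫ t in (0 : ℝ)..1, dist (I j t) (I k t)) = μ)
    {a b : ℤ → Fin α} {γ₁ γ₂ : ℝ → Plane} (ha : IsSeq I a γ₁) (hb : IsSeq I b γ₂) (i : ℤ) :
    (∫ t in (i:ℝ)..((i:ℝ)+1), dist (γ₁ t) (γ₂ t)) = if a i = b i then 0 else μ := by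
  have key : (∫ t in (i:ℝ)..((i:ℝ)+1), dist (γ₁ t) (γ₂ t))
      = ∫ s in (0:ℝ)..1, dist (I (a i) s) (I (b i) s) := by
    have h1 := intervalIntegral.integral_comp_add_left (fun t => dist (γ₁ t) (γ₂ t)) (i:ℝ)
      (a := 0) (b := 1)
    rw [add_zero] at h1
    rw [← h1]
    apply intervalIntegral.integral_congr
    intro s hs
    rw [Set.uIcc_of_le (by norm_num : (0:ℝ) ≤ 1)] at hs
    simp only [ha i s hs, hb i s hs]
  rw [key]
  by_cases h : a i = b i
  · simp [h]
  · simp [h, hsep _ _ h]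

noncomputable def dl (μ : ℝ) (a b : ℤ → Fin α) (i : ℤ) : ℝ :=
  (2:ℝ) ^ (-|i|) * (if a i = b i then 0 else μ)

theorem dl_nonneg {μ : ℝ} (hμ : 0 < μ) (a b : ℤ → Fin α) (i : ℤ) : 0 ≤ dl μ a b i := by
  unfold dl
  positivity

theorem dl_le {μ : ℝ} (hμ : 0 < μ) (a b : ℤ → Fin α) (i : ℤ) :
    dl μ a b i ≤ (2:ℝ) ^ (-|i|) * μ := by
  unfold dl
  gcongr
  split_ifs
  exacts [hμ.le, le_rfl]

theorem summable_dl {μ : ℝ} (hμ : 0 < μ) (a b : ℤ → Fin α) : Summable (dl μ a b) :=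
  Summable.of_nonneg_of_le (dl_nonneg hμ a b) (dl_le hμ a b) (summable_geom_abs μ)

theorem rho_eq {I : Fin α → ℝ → Plane} {μ : ℝ}
    (hsep : ∀ j k, j ≠ k → (∫ t in (0 : ℝ)..1, dist (I j t) (I k t)) = μ)
    {a b : ℤ → Fin α} {γ₁ γ₂ : ℝ → Plane} (ha : IsSeq I a γ₁) (hb : IsSeq I b γ₂) :
    rho γ₁ γ₂ = ∑' i : ℤ, dl μ a b i := by
  unfold rho dl
  exact tsum_congr fun i => by rw [integral_dist hsep ha hb i]

theorem mu_le_rho {I : Fin α → ℝ → Plane} {μ : ℝ} (hμ : 0 < μ)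
    (hsep : ∀ j k, j ≠ k → (∫ t in (0 : ℝ)..1, dist (I j t) (I k t)) = μ)
    {a b : ℤ → Fin α} {γ₁ γ₂ : ℝ → Plane} (ha : IsSeq I a γ₁) (hb : IsSeq I b γ₂)
    (hne : a 0 ≠ b 0) : μ ≤ rho γ₁ γ₂ := by
  rw [rho_eq hsep ha hb]
  have h0 : dl μ a b 0 = μ := by simp [dl, hne]
  calc μ = dl μ a b 0 := h0.symm
    _ ≤ ∑' i : ℤ, dl μ a b i :=
      Summable.le_tsum (summable_dl hμ a b) 0 (fun j _ => dl_nonneg hμ a b j)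

theorem rho_triangle {I : Fin α → ℝ → Plane} {μ : ℝ} (hμ : 0 < μ)
    (hsep : ∀ j k, j ≠ k → (∫ t in (0 : ℝ)..1, dist (I j t) (I k t)) = μ)
    {a b c : ℤ → Fin α} {γ₁ γ₂ γ₃ : ℝ → Plane}
    (ha : IsSeq I a γ₁) (hb : IsSeq I b γ₂) (hc : IsSeq I c γ₃) :
    rho γ₁ γ₃ ≤ rho γ₁ γ₂ + rho γ₂ γ₃ := by
  rw [rho_eq hsep ha hc, rho_eq hsep ha hb, rho_eq hsep hb hc,
    ← Summable.tsum_add (summable_dl hμ a b) (summable_dl hμ b c)]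
  apply Summable.tsum_le_tsum _ (summable_dl hμ a c) ((summable_dl hμ a b).add (summable_dl hμ b c))
  intro i
  unfold dl
  rw [← mul_add]
  gcongr
  by_cases h1 : a i = b i <;> by_cases h2 : b i = c i <;>
      simp only [h1, h2, if_true, if_false, zero_add, add_zero] <;>
      first
        | (split_ifs <;> simp [hμ.le]) 
        | (rw [if_pos (h1.trans h2)])
        | linarith

theorem rho_comm {M : Type*} [PseudoMetricSpace M] (γ₁ γ₂ : ℝ → M) : rho γ₁ γ₂ = rho γ₂ γ₁ := by
  unfold rho
  simp [dist_comm]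

noncomputable def tailSum (μ : ℝ) (k : ℕ) : ℝ :=
  ∑' i : ℤ, Set.indicator {i : ℤ | (k:ℤ) < |i|} (fun i => (2:ℝ) ^ (-|i|) * μ) i

theorem summable_tail (μ : ℝ) (hμ : 0 < μ) (k : ℕ) :
    Summable (Set.indicator {i : ℤ | (k:ℤ) < |i|} (fun i : ℤ => (2:ℝ) ^ (-|i|) * μ)) := by
  apply Summable.of_nonneg_of_le _ _ (summable_geom_abs μ)
  · intro i
    apply Set.indicator_nonneg
    intro j _
    positivity
  · intro i
    apply Set.indicator_le_self'
    intro j _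
    positivity

theorem tail_small (μ : ℝ) (hμ : 0 < μ) {ε : ℝ} (hε : 0 < ε) : ∃ k : ℕ, tailSum μ k < ε := by
  have g : ℤ → ℝ := fun i => (2:ℝ) ^ (-|i|) * μ
  have htend := tendsto_tsum_compl_atTop_zero (fun i : ℤ => (2:ℝ) ^ (-|i|) * μ)
  have hev := htend.eventually (eventually_lt_nhds hε)
  rw [eventually_atTop] at hev
  obtain ⟨s₀, hs₀⟩ := hev
  refine ⟨s₀.sup Int.natAbs, ?_⟩
  have hsub : {i : ℤ | ((s₀.sup Int.natAbs : ℕ) : ℤ) < |i|} ⊆ {x : ℤ | x ∉ s₀} := by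
    intro i hi
    simp only [Set.mem_setOf_eq] at hi ⊢
    intro hmem
    have h2 := Finset.le_sup (f := Int.natAbs) hmem
    have h3 : ((Int.natAbs i : ℕ) : ℤ) ≤ ((s₀.sup Int.natAbs : ℕ) : ℤ) := Int.ofNat_le.mpr h2
    rw [Int.abs_eq_natAbs] at hi
    omega
  have h1 : tailSum μ (s₀.sup Int.natAbs)
      ≤ ∑' (a : {x : ℤ // x ∉ s₀}), (2:ℝ) ^ (-|(a:ℤ)|) * μ := by
    have hsum2 : Summable (Set.indicator {x : ℤ | x ∉ s₀} (fun i : ℤ => (2:ℝ) ^ (-|i|) * μ)) := by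
      apply Summable.of_nonneg_of_le _ _ (summable_geom_abs μ)
      · intro i; apply Set.indicator_nonneg; intro j _; positivity
      · intro i; apply Set.indicator_le_self'; intro j _; positivity
    calc tailSum μ (s₀.sup Int.natAbs)
        ≤ ∑' i : ℤ, Set.indicator {x : ℤ | x ∉ s₀} (fun i : ℤ => (2:ℝ) ^ (-|i|) * μ) i := by
          apply Summable.tsum_le_tsum _ (summable_tail μ hμ _) hsum2
          intro i
          apply Set.indicator_le_indicator_of_subset hsub
          intro j; positivity
      _ = ∑' (x : ↑{x : ℤ | x ∉ s₀}), (2:ℝ) ^ (-|(x:ℤ)|) * μ :=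
          (tsum_subtype {x : ℤ | x ∉ s₀} (fun i : ℤ => (2:ℝ) ^ (-|i|) * μ)).symm
      _ = ∑' (a : {x : ℤ // x ∉ s₀}), (2:ℝ) ^ (-|(a:ℤ)|) * μ := rfl
  exact lt_of_le_of_lt h1 (hs₀ s₀ le_rfl)

theorem rho_iterate_le {I : Fin α → ℝ → Plane} {μ : ℝ} (hμ : 0 < μ)
    (hsep : ∀ j k, j ≠ k → (∫ t in (0 : ℝ)..1, dist (I j t) (I k t)) = μ)
    {k n : ℕ} {a b : ℤ → Fin α}
    (hagree : ∀ i : ℤ, -(k:ℤ) ≤ i → i ≤ (n:ℤ) + k → a i = b i)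
    {x y : ℝ → Plane} (hx : IsSeq I a x) (hy : IsSeq I b y) {m : ℕ} (hm : m < n) :
    rho (timeOneShift^[m] x) (timeOneShift^[m] y) ≤ tailSum μ k := by
  rw [rho_eq hsep (isSeq_iterate hx m) (isSeq_iterate hy m)]
  apply Summable.tsum_le_tsum _ (summable_dl hμ _ _) (summable_tail μ hμ k)
  intro i
  by_cases hik : (k:ℤ) < |i|
  · refine (dl_le hμ _ _ i).trans (le_of_eq ?_)
    exact (Set.indicator_of_mem (s := {i : ℤ | (k:ℤ) < |i|}) hik (fun i : ℤ => (2:ℝ) ^ (-|i|) * μ)).symm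
  · have habs := abs_le.mp (not_lt.mp hik)
    have h1 : a (i + m) = b (i + m) := by
      apply hagree <;> omega
    have h2 : dl μ (fun i => a (i + m)) (fun i => b (i + m)) i = 0 := by
      simp [dl, h1]
    rw [h2, Set.indicator_apply]
    split
    · positivity
    · exact le_rfl

theorem coverCard_le (hα : 2 ≤ α) {I : Fin α → ℝ → Plane}
    (h0 : ∀ j, I j 0 = 0) (h1 : ∀ j, I j 1 = 0) {μ : ℝ} (hμ : 0 < μ)
    (hsep : ∀ j k, j ≠ k → (∫ t in (0 : ℝ)..1, dist (I j t) (I k t)) = μ)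
    {ε : ℝ} {k : ℕ} (htail : tailSum μ k < ε) (n : ℕ) :
    coverCard rho timeOneShift (arcConcatenations I) ε n ≤ ((α ^ (n + 2*k + 1) : ℕ) : ℕ∞) := by
  classical
  set D : Finset ℤ := Finset.Icc (-(k:ℤ)) ((n:ℤ)+k) with hD
  have hz : 0 < α := by omega
  let z : Fin α := ⟨0, hz⟩
  let ext : (↥D → Fin α) → (ℤ → Fin α) := fun w i => if h : i ∈ D then w ⟨i, h⟩ else z
  let E : Finset (ℝ → Plane) :=
    Finset.image (fun w : ↥D → Fin α => seqCurve I (ext w)) Finset.univ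
  have hcov : IsDynCover rho timeOneShift (arcConcatenations I) ε n E := by
    constructor
    · intro γ hγ
      simp only [E, Finset.coe_image, Set.mem_image, Finset.mem_coe, Finset.mem_univ] at hγ
      obtain ⟨w, _, rfl⟩ := hγ
      exact ⟨ext w, isSeq_seqCurve I h0 h1 (ext w)⟩
    · intro y hy
      obtain ⟨b, hb⟩ := hy
      refine ⟨seqCurve I (ext (fun i => b i)), ?_, ?_⟩
      · simp only [E, Finset.mem_image]
        exact ⟨fun i => b i, Finset.mem_univ _, rfl⟩
      intro m hm
      have hagree : ∀ i : ℤ, -(k:ℤ) ≤ i → i ≤ (n:ℤ) + k →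
          ext (fun i : ↥D => b i) i = b i := by
        intro i hi1 hi2
        simp only [ext]
        rw [dif_pos (Finset.mem_Icc.mpr ⟨hi1, hi2⟩)]
      exact lt_of_le_of_lt
        (rho_iterate_le hμ hsep hagree (isSeq_seqCurve I h0 h1 _) hb hm) htail
  have h1' : coverCard rho timeOneShift (arcConcatenations I) ε n ≤ (E.card : ℕ∞) := by
    exact iInf₂_le E hcov
  refine h1'.trans ?_
  have hcard : E.card ≤ α ^ (n + 2*k + 1) := by
    refine Finset.card_image_le.trans ?_
    rw [Finset.card_univ, Fintype.card_fun]
    simp only [Fintype.card_fin, Fintype.card_coe]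
    have : D.card = n + 2*k + 1 := by
      rw [hD, Int.card_Icc]
      omega
    rw [this]
  exact_mod_cast hcard

theorem le_coverCard (hα : 2 ≤ α) {I : Fin α → ℝ → Plane}
    (h0 : ∀ j, I j 0 = 0) (h1 : ∀ j, I j 1 = 0) {μ : ℝ} (hμ : 0 < μ)
    (hsep : ∀ j k, j ≠ k → (∫ t in (0 : ℝ)..1, dist (I j t) (I k t)) = μ) (n : ℕ) :
    ((α ^ n : ℕ) : ℕ∞) ≤ coverCard rho timeOneShift (arcConcatenations I) (μ/2) n := by
  classical
  refine le_iInf₂ fun E hE => ?_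
  have hz : 0 < α := by omega
  let z : Fin α := ⟨0, hz⟩
  let ext : (Fin n → Fin α) → ℤ → Fin α := fun w i =>
    if h : 0 ≤ i ∧ i < n then w ⟨i.toNat, by omega⟩ else z
  have hpick : ∀ w : Fin n → Fin α, ∃ x ∈ E, ∀ i < n,
      rho (timeOneShift^[i] x) (timeOneShift^[i] (seqCurve I (ext w))) < μ/2 :=
    fun w => hE.2 _ ⟨ext w, isSeq_seqCurve I h0 h1 (ext w)⟩
  choose x hxE hxb using hpick
  have hinj : Function.Injective x := by
    intro w w' hxx
    by_contra hne
    obtain ⟨m, hm⟩ := Function.ne_iff.mp hne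
    obtain ⟨c, hc⟩ := hE.1 (hxE w)
    have h1' := hxb w m m.isLt
    have h2' := hxb w' m m.isLt
    rw [← hxx] at h2'
    have hext : ∀ w'' : Fin n → Fin α, ext w'' (((m:ℕ):ℤ)) = w'' m := by
      intro w''
      have hcond : (0:ℤ) ≤ ((m:ℕ):ℤ) ∧ ((m:ℕ):ℤ) < n := by
        constructor
        · positivity
        · exact_mod_cast m.isLt
      simp only [ext]
      rw [dif_pos hcond]
      congr 1

    have hne0 : (fun i => ext w (i + (m:ℕ))) 0 ≠ (fun i => ext w' (i + (m:ℕ))) 0 := by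
      show ext w ((0:ℤ) + (m:ℕ)) ≠ ext w' ((0:ℤ) + (m:ℕ))
      rw [zero_add, hext w, hext w']
      exact hm
    have hlow := mu_le_rho hμ hsep
      (isSeq_iterate (isSeq_seqCurve I h0 h1 (ext w)) m)
      (isSeq_iterate (isSeq_seqCurve I h0 h1 (ext w')) m) hne0
    have htri := rho_triangle hμ hsep
      (isSeq_iterate (isSeq_seqCurve I h0 h1 (ext w)) m)
      (isSeq_iterate hc m)
      (isSeq_iterate (isSeq_seqCurve I h0 h1 (ext w')) m)
    rw [rho_comm (timeOneShift^[m] (seqCurve I (ext w))) (timeOneShift^[m] (x w))] at htri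
    linarith
  have hcard : α ^ n ≤ E.card := by
    have h2 := Finset.card_le_card_of_injOn (s := Finset.univ) x (fun w _ => hxE w) hinj.injOn
    simpa [Finset.card_univ] using h2
  exact_mod_cast hcard

theorem log_pow_nat (m e : ℕ) (hm : 0 < m) :
    ENNReal.log (((m ^ e : ℕ) : ℕ∞) : ℝ≥0∞) = ((e : EReal) * (Real.log m : EReal)) := by
  rw [ENat.toENNReal_coe, Nat.cast_pow, ENNReal.log_pow]
  congr 1
  rw [ENNReal.log_pos_real (by exact_mod_cast hm.ne') (ENNReal.natCast_ne_top m)]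
  simp

theorem entropy_eq (hα : 2 ≤ α) {I : Fin α → ℝ → Plane}
    (h0 : ∀ j, I j 0 = 0) (h1 : ∀ j, I j 1 = 0) {μ : ℝ} (hμ : 0 < μ)
    (hsep : ∀ j k, j ≠ k → (∫ t in (0 : ℝ)..1, dist (I j t) (I k t)) = μ) :
    topEntropy rho timeOneShift (arcConcatenations I) = (Real.log α : EReal) := by
  have hαpos : 0 < α := by omega
  apply le_antisymm
  · -- upper bound
    apply iSup₂_le
    intro ε hε
    obtain ⟨k, htail⟩ := tail_small μ hμ hε
    set c : ℝ := ((2 * k + 1 : ℕ) : ℝ)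
    set g : ℕ → EReal := fun n => ((((n:ℝ) + c) * Real.log α / n : ℝ) : EReal) with hg
    have hle : ∀ᶠ n : ℕ in atTop,
        ENNReal.log (coverCard rho timeOneShift (arcConcatenations I) ε n) / (n : EReal)
          ≤ g n := by
      filter_upwards [eventually_ge_atTop 1] with n hn
      have h1 : ENNReal.log (coverCard rho timeOneShift (arcConcatenations I) ε n)
          ≤ (((n + 2*k + 1 : ℕ) : EReal) * (Real.log α : EReal)) := by
        rw [← log_pow_nat α (n + 2*k + 1) hαpos]
        exact ENNReal.log_monotone
          (ENat.toENNReal_le.mpr (coverCard_le hα h0 h1 hμ hsep htail n))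
      refine (EReal.div_le_div_right_of_nonneg (by exact_mod_cast Nat.zero_le n) h1).trans
        (le_of_eq ?_)
      have hcast1 : ((n + 2*k + 1 : ℕ) : EReal) = (((n:ℝ) + c : ℝ) : EReal) := by
        rw [← EReal.coe_coe_eq_natCast]
        congr 1
        simp only [c]
        push_cast
        ring
      have hcast2 : ((n : ℕ) : EReal) = (((n:ℝ)) : EReal) :=
        (EReal.coe_coe_eq_natCast n).symm
      rw [hcast1, hcast2, ← EReal.coe_mul, ← EReal.coe_div]
    have htend : Tendsto g atTop (nhds ((Real.log α : ℝ) : EReal)) := by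
      rw [hg]
      rw [EReal.tendsto_coe]
      have h1 : Tendsto (fun n : ℕ => Real.log α + c * Real.log α / n) atTop
          (nhds (Real.log α + 0)) :=
        tendsto_const_nhds.add (tendsto_const_div_atTop_nhds_zero_nat (c * Real.log α))
      rw [add_zero] at h1
      apply h1.congr'
      filter_upwards [eventually_ge_atTop 1] with n hn
      have hn0 : (n:ℝ) ≠ 0 := by positivity
      field_simp
    calc atTop.limsup (fun n : ℕ =>
          ENNReal.log (coverCard rho timeOneShift (arcConcatenations I) ε n) / (n : EReal))
        ≤ atTop.limsup g := limsup_le_limsup hle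
      _ = (Real.log α : EReal) := htend.limsup_eq
  · -- lower bound
    have hstep : (Real.log α : EReal) ≤ atTop.limsup fun n : ℕ =>
        ENNReal.log (coverCard rho timeOneShift (arcConcatenations I) (μ/2) n) / (n : EReal) := by
      have hle : ∀ᶠ n : ℕ in atTop, (Real.log α : EReal) ≤
          ENNReal.log (coverCard rho timeOneShift (arcConcatenations I) (μ/2) n) / (n : EReal) := by
        filter_upwards [eventually_ge_atTop 1] with n hn
        have h1 : (((n : ℕ) : EReal) * (Real.log α : EReal))
            ≤ ENNReal.log (coverCard rho timeOneShift (arcConcatenations I) (μ/2) n) := by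
          rw [← log_pow_nat α n hαpos]
          exact ENNReal.log_monotone (ENat.toENNReal_le.mpr (le_coverCard hα h0 h1 hμ hsep n))
        have h2 := EReal.div_le_div_right_of_nonneg
          (c := ((n : ℕ) : EReal)) (by exact_mod_cast Nat.zero_le n) h1
        have h3 : (((n : ℕ) : EReal) * (Real.log α : EReal)) / ((n : ℕ) : EReal)
            = (Real.log α : EReal) := by
          rw [mul_comm, ← EReal.mul_div, EReal.div_self (EReal.natCast_ne_bot n)
            (EReal.natCast_ne_top n)
            (by exact_mod_cast Nat.one_le_iff_ne_zero.mp hn), mul_one]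
        rwa [h3] at h2
      calc (Real.log α : EReal) = atTop.limsup (fun _ : ℕ => (Real.log α : EReal)) :=
            (limsup_const _).symm
        _ ≤ _ := limsup_le_limsup hle
    refine hstep.trans ?_
    exact le_iSup₂ (f := fun (ε : ℝ) (_ : 0 < ε) => atTop.limsup fun n : ℕ =>
      ENNReal.log (coverCard rho timeOneShift (arcConcatenations I) ε n) / (n : EReal))
      (μ/2) (half_pos hμ)

end EAC

/-- Given `α ≥ 2` Lipschitz arcs `I j : [0,1] → ℝ²` based at the origin,
any two of which are at integrated distance `μ > 0` from each other, the set `Ω*` of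
concatenations of these arcs is invariant under the time-one shift `F₁`, and the topological
entropy of `F₁` on `(Ω*, ρ)` equals `log α`. -/
theorem entropy_arcConcatenations {α : ℕ} (hα : 2 ≤ α) (I : Fin α → ℝ → Plane)
    (hlip : ∀ j, ∃ L : NNReal, LipschitzOnWith L (I j) (Set.Icc 0 1))
    (h0 : ∀ j, I j 0 = 0) (h1 : ∀ j, I j 1 = 0)
    (μ : ℝ) (hμ : 0 < μ)
    (hsep : ∀ j k, j ≠ k → (∫ t in (0 : ℝ)..1, dist (I j t) (I k t)) = μ) :
    (∀ γ ∈ arcConcatenations I, timeOneShift γ ∈ arcConcatenations I) ∧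
    topEntropy rho timeOneShift (arcConcatenations I) = (Real.log α : EReal) := by
  constructor
  · rintro γ ⟨a, ha⟩
    exact ⟨fun i => a (i + 1), EAC.isSeq_shift ha⟩
  · exact EAC.entropy_eq hα h0 h1 hμ hsep
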